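/- Let B be a normal Hausdorff space admitting a locally finite open cover 𝒰 such that every member of 𝒰 satisfies a property Π of open sets, where Π is preserved under passing to open subsets and under arbitrary disjoint unions of open sets. Then B admits a countable locally finite open cover 𝒱 all of whose members satisfy Π. -/
import Mathlib

theorem stmt_1 {B : Type*} [TopologicalSpace B] [NormalSpace B] [T2Space B]
    (P : Set (Set B)) (hP_open : ∀ W ∈ P, IsOpen W)
    (hP_sub : ∀ W ∈ P, ∀ W' ⊆ W, IsOpen W' → W' ∈ P)
    (hP_disj : ∀ S : Set (Set B), S ⊆ P → S.Pairwise Disjoint → ⋃₀ S ∈ P)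
    (𝒰 : Set (Set B)) (h𝒰P : 𝒰 ⊆ P) (h_cover : ⋃₀ 𝒰 = Set.univ)
    (h_lf : LocallyFinite (fun U : 𝒰 => (U : Set B))) :
    ∃ V : ℕ → Set B, (∀ n, V n ∈ P) ∧ (⋃ n, V n) = Set.univ ∧ LocallyFinite V := by
  classical
  have hopen : ∀ i : 𝒰, IsOpen (i : Set B) := fun i => hP_open _ (h𝒰P i.2)
  have hUniv : (Set.univ : Set B) ⊆ ⋃ i : 𝒰, (i : Set B) := by
    rw [← Set.sUnion_eq_iUnion, h_cover]
  obtain ⟨g, hg⟩ := PartitionOfUnity.exists_isSubordinate_of_locallyFinite isClosed_univ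
    (fun i : 𝒰 => (i : Set B)) hopen h_lf hUniv
  -- Milnor's sets
  set W : Finset 𝒰 → Set B :=
    fun F => {x | ∀ i ∈ F, 0 < g i x ∧ ∀ j ∉ F, g j x < g i x} with hW
  have hWopen : ∀ F, IsOpen (W F) := by
    intro F
    rw [isOpen_iff_mem_nhds]
    intro x hx
    obtain ⟨N, hN, hfin⟩ := g.locallyFinite x
    set G := hfin.toFinset with hG
    have key : N ∩ (⋂ i ∈ F, ({y | 0 < g i y} ∩ ⋂ j ∈ G \ F, {y | g j y < g i y})) ⊆ W F := by
      rintro y ⟨hyN, hy⟩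
      simp only [Set.mem_iInter, Set.mem_inter_iff, Set.mem_setOf_eq] at hy
      intro i hi
      refine ⟨(hy i hi).1, fun j hj => ?_⟩
      by_cases hjG : j ∈ G
      · exact (hy i hi).2 j (Finset.mem_sdiff.2 ⟨hjG, hj⟩)
      · have : g j y = 0 := by
          by_contra h0
          exact hjG (hfin.mem_toFinset.2 ⟨y, Function.mem_support.2 h0, hyN⟩)
        rw [this]; exact (hy i hi).1
    refine Filter.mem_of_superset ?_ key
    refine Filter.inter_mem hN ?_
    refine (Filter.biInter_finset_mem F).2 fun i hi => ?_
    refine Filter.inter_mem ?_ ?_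
    · exact (isOpen_lt continuous_const (g i).continuous).mem_nhds (hx i hi).1
    · refine (Filter.biInter_finset_mem _).2 fun j hj => ?_
      exact (isOpen_lt (g j).continuous (g i).continuous).mem_nhds
        ((hx i hi).2 j (Finset.mem_sdiff.1 hj).2)
  have hWP : ∀ F : Finset 𝒰, F.Nonempty → W F ∈ P := by
    rintro F ⟨i, hi⟩
    refine hP_sub _ (h𝒰P i.2) _ ?_ (hWopen F)
    intro x hx
    exact hg i (subset_tsupport _ (Function.mem_support.2 (ne_of_gt (hx i hi).1)))
  have hWdisj : ∀ F F' : Finset 𝒰, F.card = F'.card → F ≠ F' →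
      Disjoint (W F) (W F') := by
    intro F F' hcard hne
    rw [Set.disjoint_left]
    intro x hxF hxF'
    have h1 : (F \ F').Nonempty := by
      rw [Finset.sdiff_nonempty]
      intro hsub
      exact hne (Finset.eq_of_subset_of_card_le hsub hcard.ge)
    have h2 : (F' \ F).Nonempty := by
      rw [Finset.sdiff_nonempty]
      intro hsub
      exact hne (Finset.eq_of_subset_of_card_le hsub hcard.le).symm
    obtain ⟨i, hi⟩ := h1
    obtain ⟨i', hi'⟩ := h2
    rw [Finset.mem_sdiff] at hi hi'
    have a := (hxF i hi.1).2 i' hi'.2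
    have b := (hxF' i' hi'.1).2 i hi.2
    exact absurd (a.trans b) (lt_irrefl _)
  set V : ℕ → Set B := fun n => ⋃₀ (W '' {F | F.card = n + 1}) with hV
  refine ⟨V, ?_, ?_, ?_⟩
  · intro n
    refine hP_disj _ ?_ ?_
    · rintro _ ⟨F, hF, rfl⟩
      exact hWP F (Finset.card_pos.1 (by rw [hF]; omega))
    · rintro _ ⟨F, hF, rfl⟩ _ ⟨F', hF', rfl⟩ hne
      exact hWdisj F F' (by rw [hF, hF']) (fun h => hne (by rw [h]))
  · rw [Set.eq_univ_iff_forall]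
    intro x
    have hfin : {i : 𝒰 | g i x ≠ 0}.Finite := g.locallyFinite.point_finite x
    set T := hfin.toFinset with hT
    have hTne : T.Nonempty := by
      rw [Finset.nonempty_iff_ne_empty]
      intro h
      have : ∑ᶠ i, g i x = 1 := g.sum_eq_one (Set.mem_univ x)
      have hall : ∀ i, g i x = 0 := by
        intro i
        by_contra h0
        have : i ∈ T := hfin.mem_toFinset.2 h0
        simp [h] at this
      rw [finsum_eq_zero_of_forall_eq_zero hall] at this
      norm_num at this
    set m := (T.image (fun i => g i x)).max' (hTne.image _) with hm
    set F := T.filter (fun i => g i x = m) with hF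
    have hFne : F.Nonempty := by
      obtain ⟨i, hiT, hieq⟩ := Finset.mem_image.1 ((T.image (fun i => g i x)).max'_mem (hTne.image _))
      exact ⟨i, Finset.mem_filter.2 ⟨hiT, hieq⟩⟩
    have hxW : x ∈ W F := by
      intro i hi
      rw [hF, Finset.mem_filter] at hi
      have him : g i x = m := hi.2
      have hipos : 0 < g i x :=
        lt_of_le_of_ne (g.nonneg i x) (Ne.symm (hfin.mem_toFinset.1 hi.1))
      refine ⟨hipos, fun j hj => ?_⟩
      by_cases hjT : j ∈ T
      · have hle : g j x ≤ m :=
          (T.image (fun i => g i x)).le_max' _ (Finset.mem_image_of_mem _ hjT)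
        have hne : g j x ≠ m := fun h => hj (Finset.mem_filter.2 ⟨hjT, h⟩)
        rw [him]; exact lt_of_le_of_ne hle hne
      · have : g j x = 0 := by
          by_contra h0
          exact hjT (hfin.mem_toFinset.2 h0)
        rw [this]; exact hipos
    refine Set.mem_iUnion.2 ⟨F.card - 1, Set.mem_sUnion.2 ⟨W F, ⟨F, ?_, rfl⟩, hxW⟩⟩
    have := Finset.card_pos.2 hFne
    simp only [Set.mem_setOf_eq]
    omega
  · intro x
    obtain ⟨N, hN, hfin⟩ := g.locallyFinite x
    refine ⟨N, hN, ?_⟩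
    refine Set.Finite.subset (Set.finite_lt_nat hfin.toFinset.card) ?_
    rintro n ⟨y, hyV, hyN⟩
    obtain ⟨_, ⟨F, hFcard, rfl⟩, hyW⟩ := hyV
    have hsub : F ⊆ hfin.toFinset := by
      intro i hi
      exact hfin.mem_toFinset.2 ⟨y, Function.mem_support.2 (ne_of_gt (hyW i hi).1), hyN⟩
    have := Finset.card_le_card hsub
    simp only [Set.mem_setOf_eq] at hFcard ⊢
    omega
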